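/- Let G be a nontrivial finite group, m > 1, x ∈ G \ {e}. The induced subgraph of G_m(G) on the vertex set I_m(x) = { x^{±1}_{[k,l)} : 1 ≤ k < l ≤ m+1 } is d-regular, where d = 2m − 2 if x has order 2 and d = 2m − 1 if x has order greater than 2. -/

import Mathlib

namespace CayleyStmt10

variable {G : Type*}

def intvl [Group G] (m : ℕ) (x : G) (k l : ℕ) : Fin m → G :=
  fun i => if k ≤ i.1 + 1 ∧ i.1 + 1 < l then x else 1

def cS (G : Type*) [Group G] (m : ℕ) : Set (Fin m → G) :=
  {v | ∃ (x : G) (k l : ℕ), x ≠ 1 ∧ 1 ≤ k ∧ k < l ∧ l ≤ m + 1 ∧ v = intvl m x k l}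

def cAdj [Group G] (m : ℕ) (g h : Fin m → G) : Prop := h * g⁻¹ ∈ cS G m

def cI [Group G] (m : ℕ) (x : G) : Set (Fin m → G) :=
  {v | ∃ k l : ℕ, 1 ≤ k ∧ k < l ∧ l ≤ m + 1 ∧
    (v = intvl m x k l ∨ v = intvl m x⁻¹ k l)}

section
variable [Group G]

lemma intvl_pt {m : ℕ} (x y : G) {k l k' l' : ℕ} (h : intvl m x k l = intvl m y k' l')
    (p : ℕ) (h1 : 1 ≤ p) (h2 : p ≤ m) :
    (if k ≤ p ∧ p < l then x else 1) = (if k' ≤ p ∧ p < l' then y else 1) := by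
  have := congrFun h ⟨p - 1, by omega⟩
  simpa [intvl, Nat.sub_add_cancel h1] using this

lemma intvl_inj {m : ℕ} {x y : G} {k l k' l' : ℕ} (hx : x ≠ 1) (hy : y ≠ 1)
    (hk : 1 ≤ k) (hkl : k < l) (hl : l ≤ m + 1)
    (hk' : 1 ≤ k') (hkl' : k' < l') (hl' : l' ≤ m + 1)
    (h : intvl m x k l = intvl m y k' l') : k = k' ∧ l = l' ∧ x = y := by
  have hkk' : k = k' := by
    rcases Nat.lt_trichotomy k k' with hc | hc | hc
    · have := intvl_pt x y h k (by omega) (by omega)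
      rw [if_pos (by omega), if_neg (by omega)] at this
      exact absurd this hx
    · exact hc
    · have := intvl_pt x y h k' (by omega) (by omega)
      rw [if_neg (by omega), if_pos (by omega)] at this
      exact absurd this.symm hy
  have hll' : l = l' := by
    rcases Nat.lt_trichotomy l l' with hc | hc | hc
    · have := intvl_pt x y h l (by omega) (by omega)
      rw [if_neg (by omega), if_pos (by omega)] at this
      exact absurd this.symm hy
    · exact hc
    · have := intvl_pt x y h l' (by omega) (by omega)
      rw [if_pos (by omega), if_neg (by omega)] at this
      exact absurd this hx
  refine ⟨hkk', hll', ?_⟩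
  have := intvl_pt x y h k (by omega) (by omega)
  rwa [if_pos (by omega), if_pos (by omega)] at this

lemma intvl_mul_inv {m : ℕ} (x u y : G) (k l k' l' a b : ℕ)
    (hpt : ∀ p : ℕ,
      (if k' ≤ p ∧ p < l' then u else 1) * (if k ≤ p ∧ p < l then x else 1)⁻¹ =
        if a ≤ p ∧ p < b then y else 1) :
    intvl m u k' l' * (intvl m x k l)⁻¹ = intvl m y a b := by
  funext i
  have := hpt (i.1 + 1)
  simpa [intvl] using this

lemma cAdj_elim {m k l k' l' : ℕ} (x u : G)
    (h : cAdj m (intvl m x k l) (intvl m u k' l')) :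
    ∃ y a b : _, y ≠ (1:G) ∧ 1 ≤ a ∧ a < b ∧ b ≤ m + 1 ∧ ∀ p, 1 ≤ p → p ≤ m →
      (if k' ≤ p ∧ p < l' then u else 1) * (if k ≤ p ∧ p < l then x else 1)⁻¹ =
        if a ≤ p ∧ p < b then y else 1 := by
  obtain ⟨y, a, b, hy, ha, hab, hb, hEq⟩ := h
  refine ⟨y, a, b, hy, ha, hab, hb, fun p h1 h2 => ?_⟩
  have := congrFun hEq ⟨p - 1, by omega⟩
  simpa [intvl, Nat.sub_add_cancel h1] using this

lemma classify {m k l k' l' : ℕ} {x u : G} (hx : x ≠ 1)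
    (hk : 1 ≤ k) (hkl : k < l) (hl : l ≤ m + 1)
    (hk' : 1 ≤ k') (hkl' : k' < l') (hl' : l' ≤ m + 1)
    (hu : u = x ∨ u = x⁻¹)
    (h : cAdj m (intvl m x k l) (intvl m u k' l')) :
    ((u = x ∨ x = x⁻¹) ∧ ((k' = k ∧ l' ≠ l) ∨ (l' = l ∧ k' ≠ k)))
    ∨ ((u = x⁻¹ ∨ x = x⁻¹) ∧ (k' = l ∨ l' = k))
    ∨ (u = x⁻¹ ∧ x * x ≠ 1 ∧ k' = k ∧ l' = l) := by
  obtain ⟨y, a, b, hy, ha, hab, hb, hE⟩ := cAdj_elim x u h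
  have hxi : x⁻¹ ≠ 1 := inv_ne_one.mpr hx
  have hu1 : u ≠ 1 := by rcases hu with h | h <;> subst h <;> [exact hx; exact hxi]
  have hQ1 : ∀ p, 1 ≤ p → p ≤ m → (k' ≤ p ∧ p < l') → ¬(k ≤ p ∧ p < l) →
      a ≤ p ∧ p < b := by
    intro p h1 h2 hp hp'
    by_contra hq
    have := hE p h1 h2
    rw [if_pos hp, if_neg hp', if_neg hq] at this
    simp only [inv_one, mul_one] at this
    exact hu1 this
  have hQ2 : ∀ p, 1 ≤ p → p ≤ m → ¬(k' ≤ p ∧ p < l') → (k ≤ p ∧ p < l) →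
      a ≤ p ∧ p < b := by
    intro p h1 h2 hp hp'
    by_contra hq
    have := hE p h1 h2
    rw [if_neg hp, if_pos hp', if_neg hq] at this
    simp only [one_mul, inv_eq_one] at this
    exact hx this
  have hQ3 : ∀ p, 1 ≤ p → p ≤ m → (a ≤ p ∧ p < b) → ¬(k' ≤ p ∧ p < l') →
      ¬(k ≤ p ∧ p < l) → False := by
    intro p h1 h2 hq hp hp'
    have := hE p h1 h2
    rw [if_neg hp, if_neg hp', if_pos hq] at this
    simp only [inv_one, mul_one] at this
    exact hy this.symm
  by_cases hxx : x * x = 1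
  · -- order two case
    have hxinv : x = x⁻¹ := eq_inv_of_mul_eq_one_left hxx
    have hux : u = x := by rcases hu with h | h; exact h; rw [h, ← hxinv]
    rw [hux] at hE
    have hmid : ∀ p, 1 ≤ p → p ≤ m → (a ≤ p ∧ p < b) → (k' ≤ p ∧ p < l') →
        (k ≤ p ∧ p < l) → False := by
      intro p h1 h2 hq hp hp'
      have := hE p h1 h2
      rw [if_pos hp, if_pos hp', if_pos hq, mul_inv_cancel] at this
      exact hy this.symm
    have hne : ¬(k' = k ∧ l' = l) := by
      rintro ⟨e1, e2⟩
      have h := hE a ha (by omega)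
      by_cases hp : k ≤ a ∧ a < l
      · exact hmid a ha (by omega) ⟨le_refl a, hab⟩ (by omega) hp
      · rw [if_neg (by omega : ¬(k' ≤ a ∧ a < l')), if_neg hp,
          if_pos ⟨le_refl a, hab⟩] at h
        simp only [inv_one, mul_one] at h
        exact hy h.symm
    have claim : k' = k ∨ l' = l ∨ k' = l ∨ l' = k := by
      by_contra hcon
      push_neg at hcon
      obtain ⟨n1, n2, n3, n4⟩ := hcon
      rcases Nat.lt_or_ge l k' with hc | hc
      · have q1 := hQ2 k (by omega) (by omega) (by omega) ⟨by omega, by omega⟩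
        have q3 := hQ1 k' (by omega) (by omega) ⟨by omega, by omega⟩ (by omega)
        exact hQ3 l (by omega) (by omega) ⟨by omega, by omega⟩ (by omega) (by omega)
      rcases Nat.lt_or_ge l' k with hc' | hc'
      · have q1 := hQ1 k' (by omega) (by omega) ⟨by omega, by omega⟩ (by omega)
        have q3 := hQ2 k (by omega) (by omega) (by omega) ⟨by omega, by omega⟩
        exact hQ3 l' (by omega) (by omega) ⟨by omega, by omega⟩ (by omega) (by omega)
      rcases Nat.lt_or_ge k k' with hkk | hkk
      · rcases Nat.lt_or_ge l l' with hll | hll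
        · have q1 := hQ2 k (by omega) (by omega) (by omega) ⟨by omega, by omega⟩
          have q3 := hQ1 l (by omega) (by omega) ⟨by omega, by omega⟩ (by omega)
          exact hmid k' (by omega) (by omega) ⟨by omega, by omega⟩ ⟨by omega, by omega⟩
            ⟨by omega, by omega⟩
        · have q1 := hQ2 k (by omega) (by omega) (by omega) ⟨by omega, by omega⟩
          have q3 := hQ2 l' (by omega) (by omega) (by omega) ⟨by omega, by omega⟩
          exact hmid k' (by omega) (by omega) ⟨by omega, by omega⟩ ⟨by omega, by omega⟩
            ⟨by omega, by omega⟩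
      · rcases Nat.lt_or_ge l l' with hll | hll
        · have q1 := hQ1 k' (by omega) (by omega) ⟨by omega, by omega⟩ (by omega)
          have q3 := hQ1 l (by omega) (by omega) ⟨by omega, by omega⟩ (by omega)
          exact hmid k (by omega) (by omega) ⟨by omega, by omega⟩ ⟨by omega, by omega⟩
            ⟨by omega, by omega⟩
        · have q1 := hQ1 k' (by omega) (by omega) ⟨by omega, by omega⟩ (by omega)
          have q3 := hQ2 l' (by omega) (by omega) (by omega) ⟨by omega, by omega⟩
          exact hmid k (by omega) (by omega) ⟨by omega, by omega⟩ ⟨by omega, by omega⟩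
            ⟨by omega, by omega⟩
    rcases claim with e | e | e | e
    · exact Or.inl ⟨Or.inl hux, Or.inl ⟨e, fun e2 => hne ⟨e, e2⟩⟩⟩
    · exact Or.inl ⟨Or.inl hux, Or.inr ⟨e, fun e2 => hne ⟨e2, e⟩⟩⟩
    · exact Or.inr (Or.inl ⟨Or.inr hxinv, Or.inl e⟩)
    · exact Or.inr (Or.inl ⟨Or.inr hxinv, Or.inr e⟩)
  · -- order > 2 case
    have hne2 : x ≠ x⁻¹ := fun h => hxx (by nth_rewrite 2 [h]; exact mul_inv_cancel x)
    rcases hu with hux | hux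
    · -- u = x : must share an endpoint
      rw [hux] at hE
      have hval1 : ∀ p, 1 ≤ p → p ≤ m → (k' ≤ p ∧ p < l') → ¬(k ≤ p ∧ p < l) →
          y = x := by
        intro p h1 h2 hp hp'
        have hq := hQ1 p h1 h2 hp hp'
        have := hE p h1 h2
        rw [if_pos hp, if_neg hp', if_pos hq] at this
        simpa using this.symm
      have hval2 : ∀ p, 1 ≤ p → p ≤ m → ¬(k' ≤ p ∧ p < l') → (k ≤ p ∧ p < l) →
          y = x⁻¹ := by
        intro p h1 h2 hp hp'
        have hq := hQ2 p h1 h2 hp hp'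
        have := hE p h1 h2
        rw [if_neg hp, if_pos hp', if_pos hq] at this
        simpa using this.symm
      have hmid : ∀ p, 1 ≤ p → p ≤ m → (a ≤ p ∧ p < b) → (k' ≤ p ∧ p < l') →
          (k ≤ p ∧ p < l) → False := by
        intro p h1 h2 hq hp hp'
        have := hE p h1 h2
        rw [if_pos hp, if_pos hp', if_pos hq, mul_inv_cancel] at this
        exact hy this.symm
      have hne : ¬(k' = k ∧ l' = l) := by
        rintro ⟨e1, e2⟩
        have h := hE a ha (by omega)
        by_cases hp : k ≤ a ∧ a < l
        · exact hmid a ha (by omega) ⟨le_refl a, hab⟩ (by omega) hp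
        · rw [if_neg (by omega : ¬(k' ≤ a ∧ a < l')), if_neg hp,
            if_pos ⟨le_refl a, hab⟩] at h
          simp only [inv_one, mul_one] at h
          exact hy h.symm
      have hsub : (k ≤ k' ∧ l' ≤ l) ∨ (k' ≤ k ∧ l ≤ l') := by
        by_contra hcon
        push_neg at hcon
        have hPnotP' : ∃ p, 1 ≤ p ∧ p ≤ m ∧ (k ≤ p ∧ p < l) ∧ ¬(k' ≤ p ∧ p < l') := by
          rcases Nat.lt_or_ge k k' with hc | hc
          · exact ⟨k, by omega, by omega, ⟨by omega, by omega⟩, by omega⟩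
          · have hlt : l' < l := hcon.2 hc
            exact ⟨max k l', by omega, by omega, ⟨by omega, by omega⟩, by omega⟩
        have hP'notP : ∃ p, 1 ≤ p ∧ p ≤ m ∧ (k' ≤ p ∧ p < l') ∧ ¬(k ≤ p ∧ p < l) := by
          rcases Nat.lt_or_ge k' k with hc | hc
          · exact ⟨k', by omega, by omega, ⟨by omega, by omega⟩, by omega⟩
          · have hlt : l < l' := hcon.1 hc
            exact ⟨max k' l, by omega, by omega, ⟨by omega, by omega⟩, by omega⟩
        obtain ⟨p, hp1, hp2, hp3, hp4⟩ := hPnotP'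
        obtain ⟨q, hq1, hq2, hq3, hq4⟩ := hP'notP
        exact hne2 ((hval1 q hq1 hq2 hq3 hq4).symm.trans (hval2 p hp1 hp2 hp4 hp3))
      have claim : k' = k ∨ l' = l := by
        by_contra hcon
        push_neg at hcon
        rcases hsub with ⟨e1, e2⟩ | ⟨e1, e2⟩
        · have q1 := hQ2 k (by omega) (by omega) (by omega) ⟨by omega, by omega⟩
          have q3 := hQ2 l' (by omega) (by omega) (by omega) ⟨by omega, by omega⟩
          exact hmid k' (by omega) (by omega) ⟨by omega, by omega⟩ ⟨by omega, by omega⟩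
            ⟨by omega, by omega⟩
        · have q1 := hQ1 k' (by omega) (by omega) ⟨by omega, by omega⟩ (by omega)
          have q3 := hQ1 l (by omega) (by omega) ⟨by omega, by omega⟩ (by omega)
          exact hmid k (by omega) (by omega) ⟨by omega, by omega⟩ ⟨by omega, by omega⟩
            ⟨by omega, by omega⟩
      rcases claim with e | e
      · exact Or.inl ⟨Or.inl hux, Or.inl ⟨e, fun e2 => hne ⟨e, e2⟩⟩⟩
      · exact Or.inl ⟨Or.inl hux, Or.inr ⟨e, fun e2 => hne ⟨e2, e⟩⟩⟩
    · -- u = x⁻¹, order > 2 : adjacent or equal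
      rw [hux] at hE
      have hQ0 : ∀ p, 1 ≤ p → p ≤ m → (k' ≤ p ∧ p < l') → (k ≤ p ∧ p < l) →
          (a ≤ p ∧ p < b) ∧ y = x⁻¹ * x⁻¹ := by
        intro p h1 h2 hp hp'
        have hq : a ≤ p ∧ p < b := by
          by_contra hq
          have := hE p h1 h2
          rw [if_pos hp, if_pos hp', if_neg hq] at this
          rw [← mul_inv_rev] at this
          exact hxx (inv_eq_one.mp this)
        have := hE p h1 h2
        rw [if_pos hp, if_pos hp', if_pos hq] at this
        exact ⟨hq, this.symm⟩
      have hval1 : ∀ p, 1 ≤ p → p ≤ m → (k' ≤ p ∧ p < l') → ¬(k ≤ p ∧ p < l) →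
          y = x⁻¹ := by
        intro p h1 h2 hp hp'
        have hq := hQ1 p h1 h2 hp hp'
        have := hE p h1 h2
        rw [if_pos hp, if_neg hp', if_pos hq] at this
        simpa using this.symm
      have hval2 : ∀ p, 1 ≤ p → p ≤ m → ¬(k' ≤ p ∧ p < l') → (k ≤ p ∧ p < l) →
          y = x⁻¹ := by
        intro p h1 h2 hp hp'
        have hq := hQ2 p h1 h2 hp hp'
        have := hE p h1 h2
        rw [if_neg hp, if_pos hp', if_pos hq] at this
        simpa using this.symm
      have claim : (l ≤ k' ∨ l' ≤ k) ∨ (k' = k ∧ l' = l) := by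
        by_contra hcon
        push_neg at hcon
        obtain ⟨⟨hov1, hov2⟩, hne⟩ := hcon
        have hmidpt := hQ0 (max k k') (by omega) (by omega) ⟨by omega, by omega⟩
          ⟨by omega, by omega⟩
        have hy2 : y = x⁻¹ * x⁻¹ := hmidpt.2
        have hyx : y = x⁻¹ := by
          rcases Nat.lt_trichotomy k k' with hc | hc | hc
          · exact hval2 k (by omega) (by omega) (by omega) ⟨by omega, by omega⟩
          · rcases Nat.lt_trichotomy l l' with hd | hd | hd
            · exact hval1 l (by omega) (by omega) ⟨by omega, by omega⟩ (by omega)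
            · exact absurd hd.symm (hne hc.symm)
            · exact hval2 l' (by omega) (by omega) (by omega) ⟨by omega, by omega⟩
          · exact hval1 k' (by omega) (by omega) ⟨by omega, by omega⟩ (by omega)
        have heq : x⁻¹ * x⁻¹ = x⁻¹ := hy2.symm.trans hyx
        rw [_root_.mul_eq_right] at heq
        exact hxi heq
      rcases claim with (e | e) | ⟨e1, e2⟩
      · have hlk : l = k' := by
          by_contra hne
          have q1 := hQ2 k (by omega) (by omega) (by omega) ⟨by omega, by omega⟩
          have q3 := hQ1 k' (by omega) (by omega) ⟨by omega, by omega⟩ (by omega)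
          exact hQ3 l (by omega) (by omega) ⟨by omega, by omega⟩ (by omega) (by omega)
        exact Or.inr (Or.inl ⟨Or.inl hux, Or.inl hlk.symm⟩)
      · have hlk : l' = k := by
          by_contra hne
          have q1 := hQ1 k' (by omega) (by omega) ⟨by omega, by omega⟩ (by omega)
          have q3 := hQ2 k (by omega) (by omega) (by omega) ⟨by omega, by omega⟩
          exact hQ3 l' (by omega) (by omega) ⟨by omega, by omega⟩ (by omega) (by omega)
        exact Or.inr (Or.inl ⟨Or.inl hux, Or.inr hlk⟩)
      · exact Or.inr (Or.inr ⟨hux, hxx, e1, e2⟩)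

lemma count_main {m k l : ℕ} {x : G} (hx : x ≠ 1)
    (hk : 1 ≤ k) (hkl : k < l) (hl : l ≤ m + 1) :
    (x * x = 1 → {w : Fin m → G | w ∈ cI m x ∧ cAdj m (intvl m x k l) w}.ncard = 2 * m - 2) ∧
    (x * x ≠ 1 → {w : Fin m → G | w ∈ cI m x ∧ cAdj m (intvl m x k l) w}.ncard = 2 * m - 1) := by
  classical
  have hxi : x⁻¹ ≠ 1 := inv_ne_one.mpr hx
  have mkAdj : ∀ (u : G) (k' l' : ℕ) (y : G) (a b : ℕ), y ≠ 1 → 1 ≤ a → a < b →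
      b ≤ m + 1 →
      (∀ p : ℕ, (if k' ≤ p ∧ p < l' then u else 1) *
        (if k ≤ p ∧ p < l then x else 1)⁻¹ = if a ≤ p ∧ p < b then y else 1) →
      cAdj m (intvl m x k l) (intvl m u k' l') := by
    intro u k' l' y a b hy h1 h2 h3 hpt
    exact ⟨y, a, b, hy, h1, h2, h3, intvl_mul_inv x u y k l k' l' a b hpt⟩
  set A : Finset (Fin m → G) :=
    ((Finset.Ioc k (m+1)).erase l).image (fun l' => intvl m x k l') with hAdef
  set B : Finset (Fin m → G) :=
    ((Finset.Ico 1 l).erase k).image (fun k' => intvl m x k' l) with hBdef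
  set C : Finset (Fin m → G) :=
    (Finset.Ioc l (m+1)).image (fun l' => intvl m x⁻¹ l l') with hCdef
  set D : Finset (Fin m → G) :=
    (Finset.Ico 1 k).image (fun k' => intvl m x⁻¹ k' k) with hDdef
  set E : Finset (Fin m → G) :=
    (if x * x = 1 then ∅ else {intvl m x⁻¹ k l}) with hEdef
  have hset : {w : Fin m → G | w ∈ cI m x ∧ cAdj m (intvl m x k l) w}
      = ↑(A ∪ B ∪ C ∪ D ∪ E) := by
    ext w
    simp only [Set.mem_setOf_eq, Finset.coe_union, Set.mem_union, hAdef, hBdef, hCdef,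
      hDdef, hEdef, Finset.coe_image, Set.mem_image, Finset.mem_coe, Finset.mem_erase,
      Finset.mem_Ioc, Finset.mem_Ico, Finset.coe_singleton, Set.mem_singleton_iff]
    constructor
    · rintro ⟨⟨k', l', hk', hkl', hl', hw⟩, hadj⟩
      have hu : ∃ u : G, (u = x ∨ u = x⁻¹) ∧ w = intvl m u k' l' := by
        rcases hw with hw | hw
        · exact ⟨x, Or.inl rfl, hw⟩
        · exact ⟨x⁻¹, Or.inr rfl, hw⟩
      obtain ⟨u, huu, rfl⟩ := hu
      have hclass := classify hx hk hkl hl hk' hkl' hl' huu hadj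
      rcases hclass with ⟨hsgn, ⟨e1, e2⟩ | ⟨e1, e2⟩⟩ | ⟨hsgn, e | e⟩ | ⟨hsgn, hxx, e1, e2⟩
      · -- k' = k, l' ≠ l : in A
        have hux : u = x := by
          rcases hsgn with h | h
          · exact h
          · rcases huu with h2 | h2
            · exact h2
            · rw [h2]; exact h.symm
        subst hux; subst e1
        exact Or.inl (Or.inl (Or.inl (Or.inl ⟨l', ⟨e2, hkl', hl'⟩, rfl⟩)))
      · -- l' = l, k' ≠ k : in B
        have hux : u = x := by
          rcases hsgn with h | h
          · exact h
          · rcases huu with h2 | h2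
            · exact h2
            · rw [h2]; exact h.symm
        subst hux; subst e1
        exact Or.inl (Or.inl (Or.inl (Or.inr ⟨k', ⟨e2, hk', hkl'⟩, rfl⟩)))
      · -- k' = l : in C
        have hux : u = x⁻¹ := by
          rcases hsgn with h | h
          · exact h
          · rcases huu with h2 | h2
            · rw [h2]; exact h
            · exact h2
        subst hux; subst e
        exact Or.inl (Or.inl (Or.inr ⟨l', ⟨hkl', hl'⟩, rfl⟩))
      · -- l' = k : in D
        have hux : u = x⁻¹ := by
          rcases hsgn with h | h
          · exact h
          · rcases huu with h2 | h2
            · rw [h2]; exact h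
            · exact h2
        subst hux; subst e
        exact Or.inl (Or.inr ⟨k', ⟨hk', hkl'⟩, rfl⟩)
      · -- equal case : in E
        subst hsgn; subst e1; subst e2
        refine Or.inr ?_
        rw [if_neg hxx]
        exact Finset.mem_singleton_self _
    · rintro ((((⟨l', ⟨hne, hlo, hhi⟩, rfl⟩ | ⟨k', ⟨hne, hlo, hhi⟩, rfl⟩) |
        ⟨l', ⟨hlo, hhi⟩, rfl⟩) | ⟨k', ⟨hlo, hhi⟩, rfl⟩) | hE)
      · -- A
        refine ⟨⟨k, l', hk, hlo, hhi, Or.inl rfl⟩, ?_⟩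
        rcases Nat.lt_or_ge l' l with hc | hc
        · exact mkAdj x k l' x⁻¹ l' l hxi (by omega) (by omega) (by omega)
            (fun p => by split_ifs <;> first | (exfalso; omega) | group)
        · have hc : l < l' := by omega
          exact mkAdj x k l' x l l' hx (by omega) (by omega) (by omega)
            (fun p => by split_ifs <;> first | (exfalso; omega) | group)
      · -- B
        refine ⟨⟨k', l, hlo, hhi, hl, Or.inl rfl⟩, ?_⟩
        rcases Nat.lt_or_ge k' k with hc | hc
        · exact mkAdj x k' l x k' k hx (by omega) (by omega) (by omega)
            (fun p => by split_ifs <;> first | (exfalso; omega) | group)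
        · have hc : k < k' := by omega
          exact mkAdj x k' l x⁻¹ k k' hxi (by omega) (by omega) (by omega)
            (fun p => by split_ifs <;> first | (exfalso; omega) | group)
      · -- C
        refine ⟨⟨l, l', by omega, hlo, hhi, Or.inr rfl⟩, ?_⟩
        exact mkAdj x⁻¹ l l' x⁻¹ k l' hxi (by omega) (by omega) (by omega)
          (fun p => by split_ifs <;> first | (exfalso; omega) | group)
      · -- D
        refine ⟨⟨k', k, hlo, hhi, by omega, Or.inr rfl⟩, ?_⟩
        exact mkAdj x⁻¹ k' k x⁻¹ k' l hxi (by omega) (by omega) (by omega)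
          (fun p => by split_ifs <;> first | (exfalso; omega) | group)
      · -- E
        by_cases hxx : x * x = 1
        · rw [if_pos hxx] at hE; simp at hE
        · rw [if_neg hxx] at hE
          have hE2 : w = intvl m x⁻¹ k l := by simpa using hE
          subst hE2
          refine ⟨⟨k, l, hk, hkl, hl, Or.inr rfl⟩, ?_⟩
          have hyne : x⁻¹ * x⁻¹ ≠ 1 := by
            intro h
            rw [← mul_inv_rev, inv_eq_one] at h
            exact hxx h
          exact mkAdj x⁻¹ k l (x⁻¹ * x⁻¹) k l hyne (by omega) (by omega) (by omega)
            (fun p => by split_ifs <;> first | (exfalso; omega) | group)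
  -- cardinalities
  have cardA : A.card = m - k := by
    rw [hAdef, Finset.card_image_of_injOn, Finset.card_erase_of_mem (by
      simp [Finset.mem_Ioc]; omega), Nat.card_Ioc]
    · omega
    · intro l1 h1 l2 h2 heq
      simp only [Finset.coe_erase, Set.mem_diff, Finset.mem_coe, Finset.mem_Ioc] at h1 h2
      exact (intvl_inj hx hx hk h1.1.1 h1.1.2 hk h2.1.1 h2.1.2 heq).2.1
  have cardB : B.card = l - 2 := by
    rw [hBdef, Finset.card_image_of_injOn, Finset.card_erase_of_mem (by
      simp [Finset.mem_Ico]; omega), Nat.card_Ico]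
    · omega
    · intro k1 h1 k2 h2 heq
      simp only [Finset.coe_erase, Set.mem_diff, Finset.mem_coe, Finset.mem_Ico] at h1 h2
      exact (intvl_inj hx hx h1.1.1 h1.1.2 hl h2.1.1 h2.1.2 hl heq).1
  have cardC : C.card = m + 1 - l := by
    rw [hCdef, Finset.card_image_of_injOn, Nat.card_Ioc]
    intro l1 h1 l2 h2 heq
    simp only [Finset.coe_Ioc, Set.mem_Ioc] at h1 h2
    exact (intvl_inj hxi hxi (by omega) h1.1 h1.2 (by omega) h2.1 h2.2 heq).2.1
  have cardD : D.card = k - 1 := by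
    rw [hDdef, Finset.card_image_of_injOn, Nat.card_Ico]
    intro k1 h1 k2 h2 heq
    simp only [Finset.coe_Ico, Set.mem_Ico] at h1 h2
    exact (intvl_inj hxi hxi h1.1 h1.2 (by omega) h2.1 h2.2 (by omega) heq).1
  -- disjointness helpers
  have getA : ∀ w ∈ A, ∃ l', l' ≠ l ∧ k < l' ∧ l' ≤ m + 1 ∧ w = intvl m x k l' := by
    intro w hw
    rw [hAdef, Finset.mem_image] at hw
    obtain ⟨l', h1, h2⟩ := hw
    rw [Finset.mem_erase, Finset.mem_Ioc] at h1
    exact ⟨l', h1.1, h1.2.1, h1.2.2, h2.symm⟩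
  have getB : ∀ w ∈ B, ∃ k', k' ≠ k ∧ 1 ≤ k' ∧ k' < l ∧ w = intvl m x k' l := by
    intro w hw
    rw [hBdef, Finset.mem_image] at hw
    obtain ⟨k', h1, h2⟩ := hw
    rw [Finset.mem_erase, Finset.mem_Ico] at h1
    exact ⟨k', h1.1, h1.2.1, h1.2.2, h2.symm⟩
  have getC : ∀ w ∈ C, ∃ l', l < l' ∧ l' ≤ m + 1 ∧ w = intvl m x⁻¹ l l' := by
    intro w hw
    rw [hCdef, Finset.mem_image] at hw
    obtain ⟨l', h1, h2⟩ := hw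
    rw [Finset.mem_Ioc] at h1
    exact ⟨l', h1.1, h1.2, h2.symm⟩
  have getD : ∀ w ∈ D, ∃ k', 1 ≤ k' ∧ k' < k ∧ w = intvl m x⁻¹ k' k := by
    intro w hw
    rw [hDdef, Finset.mem_image] at hw
    obtain ⟨k', h1, h2⟩ := hw
    rw [Finset.mem_Ico] at h1
    exact ⟨k', h1.1, h1.2, h2.symm⟩
  have dAB : Disjoint A B := by
    rw [Finset.disjoint_left]
    intro w hwA hwB
    obtain ⟨l1, e1, e2, e3, hw1⟩ := getA w hwA
    obtain ⟨k1, f1, f2, f3, hw2⟩ := getB w hwB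
    have := intvl_inj hx hx hk e2 e3 f2 f3 hl (hw1.symm.trans hw2)
    omega
  have dABC : Disjoint (A ∪ B) C := by
    rw [Finset.disjoint_left]
    intro w hwAB hwC
    obtain ⟨l2, g1, g2, hw2⟩ := getC w hwC
    rcases Finset.mem_union.mp hwAB with hwA | hwB
    · obtain ⟨l1, e1, e2, e3, hw1⟩ := getA w hwA
      have := intvl_inj hx hxi hk e2 e3 (by omega) g1 g2 (hw1.symm.trans hw2)
      omega
    · obtain ⟨k1, f1, f2, f3, hw1⟩ := getB w hwB
      have := intvl_inj hx hxi f2 f3 hl (by omega) g1 g2 (hw1.symm.trans hw2)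
      omega
  have dABCD : Disjoint (A ∪ B ∪ C) D := by
    rw [Finset.disjoint_left]
    intro w hwABC hwD
    obtain ⟨k2, g1, g2, hw2⟩ := getD w hwD
    rcases Finset.mem_union.mp hwABC with hwAB | hwC
    · rcases Finset.mem_union.mp hwAB with hwA | hwB
      · obtain ⟨l1, e1, e2, e3, hw1⟩ := getA w hwA
        have := intvl_inj hx hxi hk e2 e3 g1 g2 (by omega) (hw1.symm.trans hw2)
        omega
      · obtain ⟨k1, f1, f2, f3, hw1⟩ := getB w hwB
        have := intvl_inj hx hxi f2 f3 hl g1 g2 (by omega) (hw1.symm.trans hw2)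
        omega
    · obtain ⟨l2, g3, g4, hw1⟩ := getC w hwC
      have := intvl_inj hxi hxi (by omega) g3 g4 g1 g2 (by omega) (hw1.symm.trans hw2)
      omega
  have dABCDE : Disjoint (A ∪ B ∪ C ∪ D) E := by
    by_cases hxx : x * x = 1
    · rw [hEdef, if_pos hxx]
      exact Finset.disjoint_empty_right _
    · rw [hEdef, if_neg hxx]
      rw [Finset.disjoint_left]
      intro w hwABCD hwE
      rw [Finset.mem_singleton] at hwE
      subst hwE
      have hxne : x ≠ x⁻¹ := by
        intro h
        exact hxx (by nth_rewrite 2 [h]; exact mul_inv_cancel x)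
      rcases Finset.mem_union.mp hwABCD with hwABC | hwD
      · rcases Finset.mem_union.mp hwABC with hwAB | hwC
        · rcases Finset.mem_union.mp hwAB with hwA | hwB
          · obtain ⟨l1, e1, e2, e3, hw2⟩ := getA _ hwA
            have := intvl_inj hxi hx hk hkl hl hk e2 e3 hw2
            exact hxne this.2.2.symm
          · obtain ⟨k1, f1, f2, f3, hw2⟩ := getB _ hwB
            have := intvl_inj hxi hx hk hkl hl f2 f3 hl hw2
            exact hxne this.2.2.symm
        · obtain ⟨l2, g1, g2, hw2⟩ := getC _ hwC
          have := intvl_inj hxi hxi hk hkl hl (by omega) g1 g2 hw2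
          omega
      · obtain ⟨k2, g1, g2, hw2⟩ := getD _ hwD
        have := intvl_inj hxi hxi hk hkl hl g1 g2 (by omega) hw2
        omega
  have hcard : (A ∪ B ∪ C ∪ D ∪ E).card = m - k + (l - 2) + (m + 1 - l) + (k - 1) + E.card := by
    rw [Finset.card_union_of_disjoint dABCDE, Finset.card_union_of_disjoint dABCD,
      Finset.card_union_of_disjoint dABC, Finset.card_union_of_disjoint dAB,
      cardA, cardB, cardC, cardD]
  constructor
  · intro hxx
    rw [hset, Set.ncard_coe_finset, hcard, hEdef, if_pos hxx]
    simp only [Finset.card_empty]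
    omega
  · intro hxx
    rw [hset, Set.ncard_coe_finset, hcard, hEdef, if_neg hxx]
    simp only [Finset.card_singleton]
    omega

lemma cI_inv (m : ℕ) (x : G) : cI m x⁻¹ = cI m x := by
  ext w
  simp only [cI, Set.mem_setOf_eq, inv_inv]
  constructor <;> rintro ⟨k, l, h1, h2, h3, h4 | h4⟩ <;>
    exact ⟨k, l, h1, h2, h3, by tauto⟩

end

/-- The induced subgraph of `Cay(G^m, S)` on `I_m(x)` is `(2m−2)`-regular when
`x` has order `2` and `(2m−1)`-regular when `x` has order greater than `2`. -/
theorem induced_subgraph_regular [Group G] [Fintype G] (m : ℕ) (hm : 1 < m)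
    (x : G) (hx : x ≠ 1) :
    (orderOf x = 2 → ∀ v ∈ cI m x,
      {w : Fin m → G | w ∈ cI m x ∧ cAdj m v w}.ncard = 2 * m - 2) ∧
    (2 < orderOf x → ∀ v ∈ cI m x,
      {w : Fin m → G | w ∈ cI m x ∧ cAdj m v w}.ncard = 2 * m - 1) := by
  have hx' : x⁻¹ ≠ 1 := inv_ne_one.mpr hx
  constructor
  · intro h2 v hv
    obtain ⟨k, l, hk, hkl, hl, hc⟩ := hv
    have hxx : x * x = 1 := by
      have := pow_orderOf_eq_one x
      rwa [h2, pow_two] at this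
    rcases hc with rfl | rfl
    · exact (count_main hx hk hkl hl).1 hxx
    · have := (count_main hx' hk hkl hl).1 (by
        rw [← mul_inv_rev, inv_eq_one]; exact hxx)
      rwa [cI_inv] at this
  · intro h2 v hv
    obtain ⟨k, l, hk, hkl, hl, hc⟩ := hv
    have hxx : x * x ≠ 1 := by
      intro h
      have hdvd : orderOf x ∣ 2 := orderOf_dvd_of_pow_eq_one (by rwa [pow_two])
      have := Nat.le_of_dvd (by norm_num) hdvd
      omega
    rcases hc with rfl | rfl
    · exact (count_main hx hk hkl hl).2 hxx
    · have := (count_main hx' hk hkl hl).2 (fun h =>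
        hxx (by rwa [← mul_inv_rev, inv_eq_one] at h))
      rwa [cI_inv] at this

end CayleyStmt10
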